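/- Let r, k be positive integers, let t1 = ξ_1 ≤ ξ_2 ≤ ⋯ ≤ ξ_{k+1} ≤ t2 be real numbers with τ_j = ξ_{j+1} − ξ_j for j = 1,…,k, let c_0,…,c_{r−1} ≥ 0 and s_1,…,s_k be reals, and define a_{j,i} by the recursion a_{0,i} = c_i for i = 0,…,r−1 and a_{j,r−p} = Σ_{i=1}^{p} a_{j−1,r−i} τ_j^{p−i}/(p−i)! + s_j τ_j^{p}/p! for p = 1,…,r and j = 1,…,k. Let α : ℝ → ℝ be a locally Lipschitz extended class-K function and let φ : ℝ → ℝ be r-times differentiable on [t1, t2]. Assume: (i) φ^{(i)}(t1) ≥ c_i for i = 0,…,r−1; (ii) for each j = 1,…,k, φ^{(r)}(t) ≥ s_j for all t ∈ [ξ_j, ξ_{j+1}]; (iii) φ^{(r)}(t) ≥ −α(φ^{(r−1)}(t) − c_{r−1}) for all t ∈ [ξ_{k+1}, t2]; (iv) for each j = 1,…,k and all t ∈ [ξ_j, ξ_{j+1}], Σ_{i=1}^{r} a_{j−1,r−i}(t−ξ_j)^{r−i}/(r−i)! + s_j (t−ξ_j)^{r}/r! ≥ 0; (v) a_{k,r−p}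 ≥ c_{r−p} for p = 1,…,r. Then φ(t) ≥ 0 for all t ∈ [t1, t2], and moreover φ^{(i)}(t) ≥ c_i for all i = 0,…,r−1 and all t ∈ [ξ_{k+1}, t2]. -/

import Mathlib

open Set

private noncomputable def polyP (b : ℕ → ℝ) (sj x : ℝ) (p : ℕ) : ℝ :=
  (∑ i ∈ Finset.Icc 1 p, b i * x ^ (p - i) / (Nat.factorial (p - i) : ℝ))
    + sj * x ^ p / (Nat.factorial p : ℝ)

private lemma Icc_insert_top (p : ℕ) :
    Finset.Icc 1 (p + 1) = insert (p + 1) (Finset.Icc 1 p) := by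
  ext x; simp only [Finset.mem_Icc, Finset.mem_insert]; omega

private lemma polyP_zero (b : ℕ → ℝ) (sj x : ℝ) : polyP b sj x 0 = sj := by
  simp [polyP]

private lemma polyP_at_zero (b : ℕ → ℝ) (sj : ℝ) (p : ℕ) :
    polyP b sj 0 (p + 1) = b (p + 1) := by
  rw [polyP, Icc_insert_top, Finset.sum_insert (by simp)]
  rw [Finset.sum_eq_zero, Nat.sub_self]
  · simp
  · intro i hi
    rw [Finset.mem_Icc] at hi
    have : p + 1 - i ≠ 0 := by omega
    simp [zero_pow this]

private lemma polyP_hasDeriv (b : ℕ → ℝ) (sj z : ℝ) (p : ℕ) (t : ℝ) :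
    HasDerivAt (fun u => polyP b sj (u - z) (p + 1)) (polyP b sj (t - z) p) t := by
  have hpow : ∀ n : ℕ, HasDerivAt (fun u : ℝ => (u - z) ^ n)
      ((n : ℝ) * (t - z) ^ (n - 1)) t := by
    intro n
    simpa [Function.comp_def] using ((hasDerivAt_pow n (t - z)).comp t ((hasDerivAt_id t).sub_const z))
  have hterm : ∀ i ∈ Finset.Icc 1 (p + 1),
      HasDerivAt (fun u : ℝ => b i * (u - z) ^ (p + 1 - i) / (Nat.factorial (p + 1 - i) : ℝ))
        (b i * (((p + 1 - i : ℕ) : ℝ) * (t - z) ^ (p + 1 - i - 1)) / (Nat.factorial (p + 1 - i) : ℝ)) t :=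
    fun i _ => ((hpow (p + 1 - i)).const_mul (b i)).div_const _
  have hsum := HasDerivAt.sum hterm
  have hstop : HasDerivAt (fun u : ℝ => sj * (u - z) ^ (p + 1) / (Nat.factorial (p + 1) : ℝ))
      (sj * (((p + 1 : ℕ) : ℝ) * (t - z) ^ p) / (Nat.factorial (p + 1) : ℝ)) t := by
    simpa using ((hpow (p + 1)).const_mul sj).div_const (Nat.factorial (p + 1) : ℝ)
  have H := hsum.add hstop
  convert H using 1
  · rfl
  · rfl
  · ext u; simp only [polyP, Pi.add_apply, Finset.sum_apply]
  rw [polyP]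
  congr 1
  · rw [Icc_insert_top, Finset.sum_insert (by simp)]
    have htop : b (p + 1) * (((p + 1 - (p + 1) : ℕ) : ℝ) * (t - z) ^ (p + 1 - (p + 1) - 1))
        / (Nat.factorial (p + 1 - (p + 1)) : ℝ) = 0 := by
      simp
    rw [htop, zero_add]
    apply Finset.sum_congr rfl
    intro i hi
    rw [Finset.mem_Icc] at hi
    have h1 : p + 1 - i = (p - i) + 1 := by omega
    have h2 : p + 1 - i - 1 = p - i := by omega
    rw [h1, Nat.add_sub_cancel, Nat.factorial_succ]
    have hfac : (Nat.factorial (p - i) : ℝ) ≠ 0 := Nat.cast_ne_zero.2 (Nat.factorial_ne_zero _)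
    push_cast
    field_simp
  · rw [Nat.factorial_succ]
    have hfac : (Nat.factorial p : ℝ) ≠ 0 := Nat.cast_ne_zero.2 (Nat.factorial_ne_zero _)
    push_cast
    field_simp

private lemma monoAux {f f' : ℝ → ℝ} {A B : ℝ}
    (h : ∀ t ∈ Set.Icc A B, HasDerivAt f (f' t) t)
    (h' : ∀ t ∈ Set.Ioo A B, 0 ≤ f' t) : MonotoneOn f (Set.Icc A B) := by
  apply monotoneOn_of_deriv_nonneg (convex_Icc A B)
    (fun t ht => (h t ht).continuousAt.continuousWithinAt)
  · intro x hx
    rw [interior_Icc] at hx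
    exact (h x (Ioo_subset_Icc_self hx)).differentiableAt.differentiableWithinAt
  · intro x hx
    rw [interior_Icc] at hx
    rw [(h x (Ioo_subset_Icc_self hx)).deriv]
    exact h' x hx

private lemma segment_aux (r : ℕ) (A B : ℝ) (φ : ℝ → ℝ) (b : ℕ → ℝ) (sj : ℝ)
    (hdiff : ∀ i < r, ∀ t ∈ Set.Icc A B,
      HasDerivAt (iteratedDeriv i φ) (iteratedDeriv (i + 1) φ t) t)
    (hinit : ∀ p, 1 ≤ p → p ≤ r → b p ≤ iteratedDeriv (r - p) φ A)
    (hs : ∀ t ∈ Set.Icc A B, sj ≤ iteratedDeriv r φ t) :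
    ∀ p ≤ r, ∀ t ∈ Set.Icc A B, polyP b sj (t - A) p ≤ iteratedDeriv (r - p) φ t := by
  intro p
  induction p with
  | zero =>
    intro _ t ht
    rw [polyP_zero, Nat.sub_zero]
    exact hs t ht
  | succ p ih =>
    intro hp t ht
    have hp' : p ≤ r := by omega
    have hIH := ih hp'
    have hidx : r - (p + 1) + 1 = r - p := by omega
    have hlt : r - (p + 1) < r := by omega
    have hg : ∀ u ∈ Set.Icc A B,
        HasDerivAt (fun v => iteratedDeriv (r - (p + 1)) φ v - polyP b sj (v - A) (p + 1))
          (iteratedDeriv (r - p) φ u - polyP b sj (u - A) p) u := by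
      intro u hu
      have h1 := hdiff _ hlt u hu
      rw [hidx] at h1
      exact h1.sub (polyP_hasDeriv b sj A p u)
    have hmono := monoAux hg
      (fun u hu => sub_nonneg.2 (hIH u (Ioo_subset_Icc_self hu)))
    have hAmem : A ∈ Set.Icc A B := ⟨le_refl _, ht.1.trans ht.2⟩
    have hstep := hmono hAmem ht ht.1
    have hA0 : polyP b sj (A - A) (p + 1) = b (p + 1) := by
      rw [sub_self, polyP_at_zero]
    have hinit' := hinit (p + 1) (by omega) hp
    dsimp only at hstep
    rw [hA0] at hstep
    linarith



/-- **Theorem 1 of the paper, stated along a single trajectory.**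
`φ t = h(x_t)` is the barrier value, `iteratedDeriv i φ` its `i`-th time derivative.
Under per-segment lower bounds on the `r`-th derivative, the class-K condition after
recovery, the polynomial nonnegativity conditions and the return conditions, the
trajectory is safe on the attack cycle `[t1, t2]` and returns to the level set by
time `ξ (k+1)`. -/
theorem stmt_0
    (r k : ℕ) (hr : 0 < r) (hk : 0 < k)
    (t1 t2 : ℝ) (ξ τ s c : ℕ → ℝ) (a : ℕ → ℕ → ℝ)
    (hξ1 : ξ 1 = t1)
    (hξmono : ∀ j ∈ Finset.Icc 1 k, ξ j ≤ ξ (j + 1))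
    (hξend : ξ (k + 1) ≤ t2)
    (hτ : ∀ j ∈ Finset.Icc 1 k, τ j = ξ (j + 1) - ξ j)
    (hc : ∀ i < r, 0 ≤ c i)
    (α : ℝ → ℝ) (hα_mono : StrictMono α) (hα0 : α 0 = 0)
    (hα_lip : LocallyLipschitz α)
    -- the constants a_{j,i}: a_{0,i} = c_i and the recursion
    (ha0 : ∀ i < r, a 0 i = c i)
    (harec : ∀ j ∈ Finset.Icc 1 k, ∀ p ∈ Finset.Icc 1 r,
      a j (r - p) = (∑ i ∈ Finset.Icc 1 p,
          a (j - 1) (r - i) * τ j ^ (p - i) / (Nat.factorial (p - i) : ℝ))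
        + s j * τ j ^ p / (Nat.factorial p : ℝ))
    (φ : ℝ → ℝ)
    -- φ is r-times differentiable on [t1, t2]
    (hdiff : ∀ i < r, ∀ t ∈ Set.Icc t1 t2,
      HasDerivAt (iteratedDeriv i φ) (iteratedDeriv (i + 1) φ t) t)
    -- (i) initial lower bounds
    (h1 : ∀ i < r, iteratedDeriv i φ t1 ≥ c i)
    -- (ii) per-segment lower bound on the r-th derivative
    (h2 : ∀ j ∈ Finset.Icc 1 k, ∀ t ∈ Set.Icc (ξ j) (ξ (j + 1)),
      iteratedDeriv r φ t ≥ s j)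
    -- (iii) class-K condition on [ξ_{k+1}, t2]
    (h3 : ∀ t ∈ Set.Icc (ξ (k + 1)) t2,
      iteratedDeriv r φ t ≥ - α (iteratedDeriv (r - 1) φ t - c (r - 1)))
    -- (iv) polynomial nonnegativity on each segment
    (h4 : ∀ j ∈ Finset.Icc 1 k, ∀ t ∈ Set.Icc (ξ j) (ξ (j + 1)),
      (∑ i ∈ Finset.Icc 1 r,
          a (j - 1) (r - i) * (t - ξ j) ^ (r - i) / (Nat.factorial (r - i) : ℝ))
        + s j * (t - ξ j) ^ r / (Nat.factorial r : ℝ) ≥ 0)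
    -- (v) return condition
    (h5 : ∀ p ∈ Finset.Icc 1 r, a k (r - p) ≥ c (r - p)) :
    (∀ t ∈ Set.Icc t1 t2, φ t ≥ 0) ∧
    (∀ i < r, ∀ t ∈ Set.Icc (ξ (k + 1)) t2, iteratedDeriv i φ t ≥ c i) := by
  -- chain monotonicity of ξ
  have hchain : ∀ m n, 1 ≤ m → m ≤ n → n ≤ k + 1 → ξ m ≤ ξ n := by
    intro m n hm hmn hnk
    induction n, hmn using Nat.le_induction with
    | base => exact le_refl _
    | succ n hn ih =>
      have hnk' : n ≤ k := by omega
      exact (ih (by omega)).trans (hξmono n (Finset.mem_Icc.mpr ⟨by omega, hnk'⟩))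
  have hseg_sub : ∀ j, 1 ≤ j → j ≤ k →
      Set.Icc (ξ j) (ξ (j + 1)) ⊆ Set.Icc t1 t2 := by
    intro j hj1 hjk t ht
    constructor
    · rw [← hξ1]; exact (hchain 1 j le_rfl hj1 (by omega)).trans ht.1
    · exact ht.2.trans ((hchain (j + 1) (k + 1) (by omega) (by omega) le_rfl).trans hξend)
  -- the endpoint bounds a (j-1) (r-p) ≤ φ^{(r-p)}(ξ j)
  have C : ∀ j, 1 ≤ j → j ≤ k + 1 → ∀ p, 1 ≤ p → p ≤ r →
      a (j - 1) (r - p) ≤ iteratedDeriv (r - p) φ (ξ j) := by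
    intro j hj1
    induction j, hj1 using Nat.le_induction with
    | base =>
      intro _ p hp1 hpr
      rw [hξ1, ha0 (r - p) (by omega)]
      exact h1 (r - p) (by omega)
    | succ j hj ih =>
      intro hjk1 p hp1 hpr
      have hjk : j ≤ k := by omega
      have hsub := hseg_sub j hj hjk
      have hseg := segment_aux r (ξ j) (ξ (j + 1)) φ (fun i => a (j - 1) (r - i)) (s j)
        (fun i hi t ht => hdiff i hi t (hsub ht))
        (fun q hq1 hqr => ih (by omega) q hq1 hqr)
        (fun t ht => h2 j (Finset.mem_Icc.mpr ⟨hj, hjk⟩) t ht)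
      have hend : ξ (j + 1) ∈ Set.Icc (ξ j) (ξ (j + 1)) :=
        ⟨hξmono j (Finset.mem_Icc.mpr ⟨hj, hjk⟩), le_refl _⟩
      have hval := hseg p hpr (ξ (j + 1)) hend
      have hrec := harec j (Finset.mem_Icc.mpr ⟨hj, hjk⟩) p (Finset.mem_Icc.mpr ⟨hp1, hpr⟩)
      have hpoly : a j (r - p) = polyP (fun i => a (j - 1) (r - i)) (s j) (ξ (j + 1) - ξ j) p := by
        rw [hrec, hτ j (Finset.mem_Icc.mpr ⟨hj, hjk⟩)]; rfl
      simpa only [Nat.add_sub_cancel, hpoly] using hval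
  -- second conclusion: by downward induction on the derivative order
  have hb0t1 : t1 ≤ ξ (k + 1) := by
    rw [← hξ1]; exact hchain 1 (k + 1) le_rfl (by omega) le_rfl
  have htail_sub : Set.Icc (ξ (k + 1)) t2 ⊆ Set.Icc t1 t2 := fun t ht =>
    ⟨hb0t1.trans ht.1, ht.2⟩
  have hCend : ∀ p, 1 ≤ p → p ≤ r → c (r - p) ≤ iteratedDeriv (r - p) φ (ξ (k + 1)) := by
    intro p hp1 hpr
    have := C (k + 1) (by omega) le_rfl p hp1 hpr
    have h5' := h5 p (Finset.mem_Icc.mpr ⟨hp1, hpr⟩)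
    simp only [Nat.add_sub_cancel] at this
    linarith
  -- base: ψ = φ^{(r-1)} - c_{r-1} ≥ 0 on the tail
  have hψ : ∀ t ∈ Set.Icc (ξ (k + 1)) t2, c (r - 1) ≤ iteratedDeriv (r - 1) φ t := by
    by_contra hcon
    push_neg at hcon
    obtain ⟨t0, ht0, ht0lt⟩ := hcon
    set ψ : ℝ → ℝ := fun v => iteratedDeriv (r - 1) φ v - c (r - 1) with hψdef
    have hψderiv : ∀ v ∈ Set.Icc t1 t2, HasDerivAt ψ (iteratedDeriv r φ v) v := by
      intro v hv
      have h := (hdiff (r - 1) (by omega) v hv).sub_const (c (r - 1))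
      have e : r - 1 + 1 = r := by omega
      rwa [e] at h
    have hψb0 : 0 ≤ ψ (ξ (k + 1)) := by
      have := hCend 1 le_rfl hr
      simp only [hψdef, sub_nonneg]
      exact this
    have hψt0 : ψ t0 < 0 := by simp only [hψdef, sub_neg]; exact ht0lt
    set S : Set ℝ := {v | v ∈ Set.Icc (ξ (k + 1)) t0 ∧ 0 ≤ ψ v} with hSdef
    have hSne : (ξ (k + 1)) ∈ S := ⟨⟨le_refl _, ht0.1⟩, hψb0⟩
    have hSbdd : BddAbove S := ⟨t0, fun x hx => hx.1.2⟩
    set u : ℝ := sSup S with hudef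
    have hub0 : ξ (k + 1) ≤ u := le_csSup hSbdd hSne
    have hut0 : u ≤ t0 := csSup_le ⟨_, hSne⟩ (fun x hx => hx.1.2)
    have humem : u ∈ Set.Icc t1 t2 := ⟨hb0t1.trans hub0, hut0.trans ht0.2⟩
    have hcont : ContinuousAt ψ u := (hψderiv u humem).continuousAt
    have hψu : 0 ≤ ψ u := by
      by_contra hneg
      push_neg at hneg
      have hev : ∀ᶠ v in nhds u, ψ v < 0 := hcont.eventually_lt_const hneg
      rw [Metric.eventually_nhds_iff] at hev
      obtain ⟨ε, hε, hball⟩ := hev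
      obtain ⟨x, hxS, hxgt⟩ := exists_lt_of_lt_csSup ⟨_, hSne⟩
        (show u - ε / 2 < u by linarith)
      have hxle : x ≤ u := le_csSup hSbdd hxS
      have : ψ x < 0 := hball (by rw [Real.dist_eq]; rw [abs_lt]; constructor <;> linarith)
      exact absurd hxS.2 (by linarith)
    have hu_lt : u < t0 := lt_of_le_of_ne hut0 (fun h => by rw [h] at hψu; linarith)
    have hneg_on : ∀ v ∈ Set.Ioo u t0, ψ v < 0 := by
      intro v hv
      by_contra hge
      push_neg at hge
      have hvS : v ∈ S := ⟨⟨hub0.trans hv.1.le, hv.2.le⟩, hge⟩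
      exact absurd (le_csSup hSbdd hvS) (not_le.mpr hv.1)
    have hmono : MonotoneOn ψ (Set.Icc u t0) := by
      apply monoAux (f' := fun v => iteratedDeriv r φ v)
      · intro v hv
        exact hψderiv v ⟨hb0t1.trans (hub0.trans hv.1), hv.2.trans ht0.2⟩
      · intro v hv
        have hvmem : v ∈ Set.Icc (ξ (k + 1)) t2 :=
          ⟨hub0.trans hv.1.le, hv.2.le.trans ht0.2⟩
        have h3v := h3 v hvmem
        have hαle : α (ψ v) ≤ 0 := by
          rw [← hα0]
          exact (hα_mono.le_iff_le).mpr (hneg_on v hv).le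
        have : iteratedDeriv (r - 1) φ v - c (r - 1) = ψ v := rfl
        rw [this] at h3v
        linarith
    have := hmono ⟨le_refl _, hut0⟩ ⟨hut0, le_refl _⟩ hut0
    linarith
  -- downward induction
  have main2 : ∀ d, d < r → ∀ t ∈ Set.Icc (ξ (k + 1)) t2,
      c (r - 1 - d) ≤ iteratedDeriv (r - 1 - d) φ t := by
    intro d
    induction d with
    | zero => intro _; simpa using hψ
    | succ d ihd =>
      intro hdr t ht
      have hprev := ihd (by omega)
      have hi1 : r - 1 - (d + 1) + 1 = r - 1 - d := by omega
      have hilt : r - 1 - (d + 1) < r := by omega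
      have hmono : MonotoneOn (iteratedDeriv (r - 1 - (d + 1)) φ)
          (Set.Icc (ξ (k + 1)) t2) := by
        apply monoAux (f' := fun v => iteratedDeriv (r - 1 - d) φ v)
        · intro v hv
          have h := hdiff (r - 1 - (d + 1)) hilt v (htail_sub hv)
          rwa [hi1] at h
        · intro v hv
          exact (hc (r - 1 - d) (by omega)).trans
            (hprev v (Set.Ioo_subset_Icc_self hv))
      have hinit : c (r - 1 - (d + 1)) ≤ iteratedDeriv (r - 1 - (d + 1)) φ (ξ (k + 1)) := by
        have hp := hCend (d + 2) (by omega) (by omega)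
        have e : r - (d + 2) = r - 1 - (d + 1) := by omega
        rwa [e] at hp
      have := hmono ⟨le_refl _, hξend.trans_eq rfl⟩ ht ht.1
      linarith
  have conc2 : ∀ i < r, ∀ t ∈ Set.Icc (ξ (k + 1)) t2, iteratedDeriv i φ t ≥ c i := by
    intro i hi t ht
    have := main2 (r - 1 - i) (by omega) t ht
    have e : r - 1 - (r - 1 - i) = i := by omega
    rwa [e] at this
  refine ⟨?_, conc2⟩
  -- safety
  intro t ht
  rcases le_or_gt (ξ (k + 1)) t with hge | hlt
  · have := conc2 0 hr t ⟨hge, ht.2⟩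
    have h0 := hc 0 hr
    simp only [iteratedDeriv_zero] at this
    linarith
  · -- find the segment containing t
    have hfind : ∃ j, 1 ≤ j ∧ j ≤ k ∧ ξ j ≤ t ∧ t ≤ ξ (j + 1) := by
      set T : Finset ℕ := (Finset.Icc 1 k).filter (fun j => ξ j ≤ t) with hTdef
      have h1T : (1 : ℕ) ∈ T := by
        rw [hTdef, Finset.mem_filter, Finset.mem_Icc]
        exact ⟨⟨le_refl _, hk⟩, by rw [hξ1]; exact ht.1⟩
      have hTne : T.Nonempty := ⟨1, h1T⟩
      set j : ℕ := T.max' hTne with hjdef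
      have hjT : j ∈ T := T.max'_mem hTne
      rw [hTdef, Finset.mem_filter, Finset.mem_Icc] at hjT
      refine ⟨j, hjT.1.1, hjT.1.2, hjT.2, ?_⟩
      by_contra hgt
      push_neg at hgt
      rcases eq_or_lt_of_le hjT.1.2 with heq | hltk
      · rw [heq] at hgt; linarith
      · have : j + 1 ∈ T := by
          rw [hTdef, Finset.mem_filter, Finset.mem_Icc]
          exact ⟨⟨by omega, by omega⟩, hgt.le⟩
        have := Finset.le_max' T (j + 1) this
        omega
    obtain ⟨j, hj1, hjk, hjt, htj⟩ := hfind
    have hsub := hseg_sub j hj1 hjk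
    have hseg := segment_aux r (ξ j) (ξ (j + 1)) φ (fun i => a (j - 1) (r - i)) (s j)
      (fun i hi u hu => hdiff i hi u (hsub hu))
      (fun q hq1 hqr => C j hj1 (by omega) q hq1 hqr)
      (fun u hu => h2 j (Finset.mem_Icc.mpr ⟨hj1, hjk⟩) u hu)
    have hval := hseg r (le_refl r) t ⟨hjt, htj⟩
    have h4' := h4 j (Finset.mem_Icc.mpr ⟨hj1, hjk⟩) t ⟨hjt, htj⟩
    have hpoly : polyP (fun i => a (j - 1) (r - i)) (s j) (t - ξ j) r
        = (∑ i ∈ Finset.Icc 1 r,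
            a (j - 1) (r - i) * (t - ξ j) ^ (r - i) / (Nat.factorial (r - i) : ℝ))
          + s j * (t - ξ j) ^ r / (Nat.factorial r : ℝ) := rfl
    rw [hpoly] at hval
    simp only [Nat.sub_self, iteratedDeriv_zero] at hval
    linarith
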